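/- Let (J, N, ♯, T) be a hermitian cubic norm structure over K/F and let A(K) := K × J with unit (1,0), involution (s,b)‾ := (σ(s), b), and multiplication (s,b)·(t,c) := (s·t + T(b, c), s•c + σ(t)•b + b × c). Let u ∈ K with u ≠ 0 and σ(u) = −u, set s₀ := (u, 0) and μ := u² ∈ F, and define, for x, y ∈ A(K), U_x(y) := 2(x·ȳ)·x − (x·x̄)·y and ψ(x, y) := x·ȳ − y·x̄. Then for all x = (s, b) ∈ A(K): ψ(x, U_x(s₀·x)) · s₀ = 6·μ·ν(s,b)·(1,0), where ν(s,b) := (s·σ(s) − T(b, b))² − 4·T(b♯, b♯) + 4·(s·N(b) + σ(s·N(b))). In other words, the norm of A(K) is ν(s,b) = (Nr(s) − T(b,b))² − 4·T(b♯, b♯) + 4·Tr(s·N(b)), with Nr and Tr the norm and trace of K/F. -/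
import Mathlib


/-- A hermitian (non-unital) cubic norm structure over `K/F`, with respect to
the conjugation `σ` of `K`. -/
structure HermCubicNormStructure (K : Type*) [CommRing K] (σ : K → K)
    (J : Type*) [AddCommGroup J] [Module K J] where
  N : J → K
  sharp : J → J
  T : J → J → K
  N_ne_zero : N ≠ 0
  T_add_left : ∀ a b c : J, T (a + b) c = T a c + T b c
  T_add_right : ∀ a b c : J, T a (b + c) = T a b + T a c
  T_smul : ∀ (s t : K) (a b : J), T (s • a) (t • b) = s * σ t * T a b
  T_conj : ∀ a b : J, σ (T a b) = T b a
  sharp_smul : ∀ (t : K) (a : J), sharp (t • a) = (σ t) ^ 2 • sharp a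
  N_smul : ∀ (t : K) (a : J), N (t • a) = t ^ 3 * N a
  N_add : ∀ a b : J, N (a + b) = N a + T b (sharp a) + T a (sharp b) + N b
  sharp_sharp : ∀ a : J, sharp (sharp a) = N a • a

namespace HermCubicNormStructure

variable {K : Type*} [CommRing K] {σ : K → K}
  {J : Type*} [AddCommGroup J] [Module K J]

/-- The (σ-semilinear) linearization `a × b` of the adjoint map. -/
def cross (H : HermCubicNormStructure K σ J) (a b : J) : J :=
  H.sharp (a + b) - H.sharp a - H.sharp b

/-- The `U`-operator `U_a(b) = T(a,b)•a − a♯ × b`. -/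
def U (H : HermCubicNormStructure K σ J) (a b : J) : J :=
  H.T a b • a - H.cross (H.sharp a) b

end HermCubicNormStructure

section HAAlgebra

variable {K : Type*} [CommRing K] {σ : K → K}
  {J : Type*} [AddCommGroup J] [Module K J]

/-- The multiplication of the algebra `A(K) = K ⊕ J`:
`(s,b)(t,c) = (st + T(b,c), s•c + σ(t)•b + b × c)`. -/
def HAmul (H : HermCubicNormStructure K σ J) (x y : K × J) : K × J :=
  (x.1 * y.1 + H.T x.2 y.2, x.1 • y.2 + σ y.1 • x.2 + H.cross x.2 y.2)

end HAAlgebra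

/-- The involution of `A(K) = K ⊕ J`: `(s,b)‾ = (σ(s), b)`. -/
def Abar {K J : Type*} (σ : K → K) (x : K × J) : K × J := (σ x.1, x.2)

/-- The operator `V_{x,y}(z) = (x·ȳ)·z + (z·ȳ)·x − (z·x̄)·y`. -/
def AV {A : Type*} [AddCommGroup A] (mul : A → A → A) (bar : A → A)
    (x y z : A) : A :=
  mul (mul x (bar y)) z + mul (mul z (bar y)) x - mul (mul z (bar x)) y

/-- `A`, equipped with the bilinear multiplication `mul`, unit `one` and
`F`-linear involution `bar`, is a structurable `F`-algebra: `bar` is an additive,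
`F`-linear involution with `(xy)‾ = ȳ x̄`, `mul` is `F`-bilinear with unit `one`,
and the structurable identity `[V_{x,y}, V_{z,w}] = V_{V_{x,y}z, w} − V_{z, V_{y,x}w}`
holds (stated pointwise). -/
def IsStructurable (F : Type*) [Field F] {A : Type*} [AddCommGroup A] [Module F A]
    (mul : A → A → A) (bar : A → A) (one : A) : Prop :=
  (∀ x y, bar (x + y) = bar x + bar y) ∧
  (∀ (c : F) (x), bar (c • x) = c • bar x) ∧
  (∀ x, bar (bar x) = x) ∧
  (∀ x y, bar (mul x y) = mul (bar y) (bar x)) ∧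
  (∀ x y z, mul (x + y) z = mul x z + mul y z) ∧
  (∀ x y z, mul x (y + z) = mul x y + mul x z) ∧
  (∀ (c : F) (x y), mul (c • x) y = c • mul x y) ∧
  (∀ (c : F) (x y), mul x (c • y) = c • mul x y) ∧
  (∀ x, mul one x = x ∧ mul x one = x) ∧
  (∀ x y z w v,
    AV mul bar x y (AV mul bar z w v) - AV mul bar z w (AV mul bar x y v) =
    AV mul bar (AV mul bar x y z) w v - AV mul bar z (AV mul bar y x w) v)

/-- The skew elements of `(A, bar)` form a one-dimensional `F`-subspace. -/
def SkewDimOne (F : Type*) [Field F] {A : Type*} [AddCommGroup A] [Module F A]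
    (bar : A → A) : Prop :=
  ∃ s₀ : A, bar s₀ = -s₀ ∧ s₀ ≠ 0 ∧ ∀ x, bar x = -x → ∃ c : F, x = c • s₀

/-- `ψ(x,y) = x·ȳ − y·x̄`. -/
def Apsi {A : Type*} [AddCommGroup A] (mul : A → A → A) (bar : A → A)
    (x y : A) : A :=
  mul x (bar y) - mul y (bar x)

/-- `U_x(y) = 2(x·ȳ)·x − (x·x̄)·y`. -/
def AUop {A : Type*} [AddCommGroup A] (mul : A → A → A) (bar : A → A)
    (x y : A) : A :=
  2 • mul (mul x (bar y)) x - mul (mul x (bar x)) y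

/-- Proposition 4.10: the norm of `A(K)` is
`ν(s,b) = (Nr(s) − T(b,b))² − 4T(b♯,b♯) + 4Tr(s·N(b))`, in the sense that
`ψ(x, U_x(s₀x))·s₀ = 6μ·ν(s,b)·(1,0)` for every `x = (s,b)`, where `s₀ = (u,0)`
is skew and `μ = u² ∈ F`. -/
theorem stmt18 {F : Type*} [Field F] (h2 : (2 : F) ≠ 0) (h3 : (3 : F) ≠ 0)
    {K : Type*} [CommRing K] [Algebra F K]
    (hdim : Module.finrank F K = 2)
    (hred : ∀ t : K, t * t = 0 → t = 0)
    (σ : K ≃ₐ[F] K)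
    (hσσ : ∀ t : K, σ (σ t) = t)
    (hfix : ∀ t : K, σ t = t ↔ ∃ c : F, t = algebraMap F K c)
    {J : Type*} [AddCommGroup J] [Module K J]
    (H : HermCubicNormStructure K (⇑σ) J)
    (u : K) (hu : u ≠ 0) (huskew : σ u = -u) :
    (∃ μ : F, algebraMap F K μ = u ^ 2) ∧
    ∀ (s : K) (b : J),
      HAmul H
        (Apsi (HAmul H) (Abar (⇑σ)) ((s, b) : K × J)
          (AUop (HAmul H) (Abar (⇑σ)) ((s, b) : K × J)
            (HAmul H ((u, 0) : K × J) ((s, b) : K × J))))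
        ((u, 0) : K × J) =
      ((6 : K) * u ^ 2 *
        ((s * σ s - H.T b b) ^ 2 - 4 * H.T (H.sharp b) (H.sharp b) +
          4 * (s * H.N b + σ (s * H.N b))),
        (0 : J)) := by
  have hσ2 : σ (2:K) = 2 := map_ofNat σ 2
  have hT0l : ∀ c : J, H.T 0 c = 0 := by
    intro c
    have h := H.T_add_left 0 0 c
    rw [add_zero] at h
    linear_combination -h
  have hTsubl : ∀ (a a' c : J), H.T (a - a') c = H.T a c - H.T a' c := by
    intro a a' c
    have h := H.T_add_left (a - a') a' c
    rw [sub_add_cancel] at h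
    linear_combination -h
  have hTsubr : ∀ (c a a' : J), H.T c (a - a') = H.T c a - H.T c a' := by
    intro c a a'
    have h := H.T_add_right c (a - a') a'
    rw [sub_add_cancel] at h
    linear_combination -h
  have hTsl : ∀ (t : K) (a c : J), H.T (t • a) c = t * H.T a c := by
    intro t a c
    have h := H.T_smul t 1 a c
    rw [one_smul, map_one, mul_one] at h
    exact h
  have hTsr : ∀ (t : K) (a c : J), H.T a (t • c) = σ t * H.T a c := by
    intro t a c
    have h := H.T_smul 1 t a c
    rw [one_smul, one_mul] at h
    exact h
  have hsharp0 : H.sharp (0 : J) = 0 := by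
    have h := H.sharp_smul 0 0
    rw [zero_smul, map_zero] at h
    simpa using h
  have hcross0 : ∀ a : J, H.cross a 0 = 0 := by
    intro a; simp [HermCubicNormStructure.cross, hsharp0]
  have hcross0' : ∀ a : J, H.cross 0 a = 0 := by
    intro a; simp [HermCubicNormStructure.cross, hsharp0]
  have hcrosscomm : ∀ a c : J, H.cross a c = H.cross c a := by
    intro a c
    simp only [HermCubicNormStructure.cross]
    rw [add_comm c a]
    abel
  have hcross_smul : ∀ (t : K) (a : J), H.cross a (t • a) = (2 * σ t) • H.sharp a := by
    intro t a
    have h1 : a + t • a = (1 + t) • a := by rw [add_smul, one_smul]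
    rw [HermCubicNormStructure.cross, h1, H.sharp_smul, H.sharp_smul, map_add, map_one]
    module
  have hcross_self : ∀ a : J, H.cross a a = (2 : K) • H.sharp a := by
    intro a
    have h := hcross_smul 1 a
    rw [one_smul, map_one, mul_one] at h
    exact h
  have hsharp_add : ∀ a c : J, H.sharp (a + c) = H.sharp a + H.sharp c + H.cross a c := by
    intro a c
    rw [HermCubicNormStructure.cross]
    abel
  have hstar : ∀ a c d : J, H.T d (H.cross a c) = H.T a (H.cross c d) := by
    intro a c d
    have E1 := H.N_add (a + c) d
    have E3 := H.N_add a (c + d)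
    rw [hsharp_add a c, H.N_add a c] at E1
    rw [hsharp_add c d, H.N_add c d] at E3
    simp only [H.T_add_left, H.T_add_right] at E1 E3
    rw [show a + c + d = a + (c + d) from add_assoc a c d] at E1
    linear_combination E3 - E1
  have hhalf : (algebraMap F K) 2⁻¹ * 2 = 1 := by
    rw [show (2:K) = algebraMap F K 2 from (map_ofNat _ 2).symm, ← map_mul,
      inv_mul_cancel₀ h2, map_one]
  have hT3N : ∀ a : J, H.T a (H.sharp a) = 3 * H.N a := by
    intro a
    have h := H.N_add a a
    rw [show a + a = (2:K) • a from (two_smul K a).symm, H.N_smul] at h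
    have key : (2:K) * H.T a (H.sharp a) = (2:K) * (3 * H.N a) := by linear_combination -h
    calc H.T a (H.sharp a) = ((algebraMap F K) 2⁻¹ * 2) * H.T a (H.sharp a) := by
          rw [hhalf, one_mul]
      _ = (algebraMap F K) 2⁻¹ * ((2:K) * (3 * H.N a)) := by rw [mul_assoc, key]
      _ = ((algebraMap F K) 2⁻¹ * 2) * (3 * H.N a) := by ring
      _ = 3 * H.N a := by rw [hhalf, one_mul]
  constructor
  · have hsq : σ (u ^ 2) = u ^ 2 := by rw [map_pow, huskew]; ring
    obtain ⟨c, hc⟩ := (hfix _).mp hsq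
    exact ⟨c, hc.symm⟩
  · intro s b
    have hTsb3 : H.T (H.sharp b) b = 3 * σ (H.N b) := by
      rw [← H.T_conj b (H.sharp b), hT3N, map_mul, map_ofNat]
    have hy : HAmul H ((u, 0) : K × J) ((s, b) : K × J) = (u * s, u • b) := by
      simp [HAmul, hT0l, hcross0']
    rw [hy]
    set U := AUop (HAmul H) (Abar (⇑σ)) ((s, b) : K × J) ((u * s, u • b) : K × J) with hUdef
    have hbarx : Abar (⇑σ) ((s, b) : K × J) = ((σ s, b) : K × J) := rfl
    have hbary : Abar (⇑σ) ((u * s, u • b) : K × J) = ((-(u * σ s), u • b) : K × J) := by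
      have h : σ (u * s) = -(u * σ s) := by rw [map_mul, huskew]; ring
      simp [Abar, h]
    have hP : HAmul H ((s, b) : K × J) ((-(u * σ s), u • b) : K × J) =
        ((-(u * (s * σ s + H.T b b)), (2 * (u * s)) • b - (2 * u) • H.sharp b) : K × J) := by
      simp only [HAmul, Prod.mk.injEq]
      constructor
      · rw [hTsr, huskew]; ring
      · rw [hcross_smul, map_neg, map_mul, hσσ, huskew]
        module
    have hQ : HAmul H ((s, b) : K × J) ((σ s, b) : K × J) =
        ((s * σ s + H.T b b, (2 * s) • b + (2 : K) • H.sharp b) : K × J) := by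
      simp only [HAmul, Prod.mk.injEq]
      refine ⟨trivial, ?_⟩
      rw [hcross_self, hσσ]
      module
    have hU1 : U.1 = -(3 * (u * (s ^ 2 * σ s))) + 3 * (u * s) * H.T b b
        - 2 * (u * H.T (H.sharp b) b) := by
      rw [hUdef, AUop, hbary, hP, hbarx, hQ, two_nsmul]
      simp only [Prod.fst_sub, Prod.fst_add, HAmul]
      rw [hTsubl, hTsl, hTsl, hTsr, H.T_add_left, hTsl, hTsl, huskew]
      ring
    have hTbU2 : H.T b U.2 =
        3 * (u * H.T b b ^ 2) - 3 * (u * (s * σ s) * H.T b b)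
          + 6 * (u * s * H.T b (H.sharp b)) - 12 * (u * H.T (H.sharp b) (H.sharp b)) := by
      rw [hUdef, AUop, hbary, hP, hbarx, hQ, two_nsmul]
      simp only [Prod.snd_sub, Prod.snd_add, HAmul]
      simp only [hTsubr, H.T_add_right]
      rw [hstar ((2 * (u * s)) • b - (2 * u) • H.sharp b) b b,
        hstar ((2 * s) • b + (2 : K) • H.sharp b) (u • b) b]
      rw [hcross_self b, hcrosscomm (u • b) b, hcross_smul u b]
      simp only [H.T_add_right, H.T_add_left, hTsubr, hTsubl, hTsl, hTsr]
      simp only [map_mul, map_neg, map_add, map_sub, hσ2, huskew, hσσ, H.T_conj]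
      ring
    have hTU2b : H.T U.2 b = σ (H.T b U.2) := (H.T_conj b U.2).symm
    have hψ1 : (Apsi (HAmul H) (Abar (⇑σ)) ((s, b) : K × J) U).1 =
        s * σ U.1 + H.T b U.2 - (U.1 * σ s + H.T U.2 b) := by
      simp only [Apsi, Abar, HAmul, Prod.fst_sub]
    have hψ2 : (Apsi (HAmul H) (Abar (⇑σ)) ((s, b) : K × J) U).2 = 0 := by
      simp only [Apsi, Abar, HAmul, Prod.snd_sub]
      rw [hσσ U.1, hσσ s, hcrosscomm U.2 b]
      abel
    have hψpair : (Apsi (HAmul H) (Abar (⇑σ)) ((s, b) : K × J) U) =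
        ((Apsi (HAmul H) (Abar (⇑σ)) ((s, b) : K × J) U).1, (0 : J)) := by
      rw [← hψ2]
    rw [hψpair]
    simp only [HAmul, Prod.mk.injEq]
    constructor
    · rw [hT0l, add_zero, hψ1, hTU2b, hU1, hTbU2]
      simp only [map_mul, map_add, map_sub, map_neg, map_pow, map_ofNat, hσσ, huskew,
        H.T_conj, hT3N, hTsb3]
      ring
    · rw [hcross0, smul_zero, smul_zero]
      simp
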